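/- Let Θ : ℝ → (0,∞) be a C¹ even function satisfying lim_{v→±∞} |v|Θ(v) = 1 and let β ∈ (1,5). Define s(v) = ∫_0^v Θ(u)^{-β} du, let s^{-1} be its inverse, ψ = s' ∘ s^{-1}, and φ(v) = s^{-1}(v)/ψ(v)². Then lim_{v→+∞} φ(v)/v^{(1-2β)/(β+1)} = (β+1)^{(1-2β)/(β+1)}. -/

import Mathlib

open MeasureTheory Filter Topology intervalIntegral

lemma aux_ratio (β : ℝ) (Θ : ℝ → ℝ) (hΘpos : ∀ v, 0 < Θ v)
    (hΘtop : Tendsto (fun v : ℝ => |v| * Θ v) atTop (𝓝 1)) :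
    Tendsto (fun u : ℝ => Θ u ^ (-β) / u ^ β) atTop (𝓝 1) := by
  have hc : ContinuousAt (fun x : ℝ => x ^ (-β)) 1 :=
    Real.continuousAt_rpow_const 1 (-β) (Or.inl one_ne_zero)
  have h1 : Tendsto (fun u : ℝ => (|u| * Θ u) ^ (-β)) atTop (𝓝 1) := by
    have := hc.tendsto.comp hΘtop
    simpa [Real.one_rpow, Function.comp_def] using this
  refine h1.congr' ?_
  filter_upwards [eventually_gt_atTop (0:ℝ)] with u hu
  rw [abs_of_pos hu, Real.mul_rpow hu.le (hΘpos u).le, Real.rpow_neg hu.le]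
  field_simp

lemma aux_int (β : ℝ) (hβ1 : 1 < β) (f : ℝ → ℝ) (hf : Continuous f)
    (hratio : Tendsto (fun u : ℝ => f u / u ^ β) atTop (𝓝 1)) :
    Tendsto (fun v : ℝ => (∫ u in (0:ℝ)..v, f u) / v ^ (β + 1)) atTop (𝓝 (1 / (β + 1))) := by
  have he : (0:ℝ) < β + 1 := by linarith
  have hrpow_cont : Continuous (fun u : ℝ => u ^ β) :=
    continuous_iff_continuousAt.2 fun x => Real.continuousAt_rpow_const x β (Or.inr (by linarith))
  rw [Metric.tendsto_atTop]
  intro ε hε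
  obtain ⟨ε₁, hε₁, hε₁e⟩ : ∃ x : ℝ, 0 < x ∧ x / (β + 1) = ε / 4 :=
    ⟨ε * (β + 1) / 4, by positivity, by field_simp⟩
  obtain ⟨N₀, hN₀⟩ := Metric.tendsto_atTop.1 hratio ε₁ hε₁
  set M := max N₀ 1 with hMdef
  have hM1 : (1:ℝ) ≤ M := le_max_right _ _
  have hM0 : (0:ℝ) < M := lt_of_lt_of_le one_pos hM1
  have hMbound : ∀ u, M ≤ u → |f u - u ^ β| ≤ ε₁ * u ^ β := by
    intro u hu
    have hu0 : (0:ℝ) < u := lt_of_lt_of_le hM0 hu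
    have hub : (0:ℝ) < u ^ β := Real.rpow_pos_of_pos hu0 β
    have h2 := (hN₀ u (le_trans (le_max_left _ _) hu)).le
    rw [Real.dist_eq, div_sub_one hub.ne', abs_div, abs_of_pos hub, div_le_iff₀ hub] at h2
    exact h2
  set I0 : ℝ := ∫ u in (0:ℝ)..M, f u with hI0
  set C : ℝ := |I0| + M ^ (β+1) / (β+1) with hC
  have hCt : Tendsto (fun v : ℝ => C / v ^ (β+1)) atTop (𝓝 0) :=
    tendsto_const_nhds.div_atTop (tendsto_rpow_atTop he)
  have hCev : ∀ᶠ v in atTop, C / v ^ (β+1) < ε / 2 :=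
    hCt.eventually_lt_const (by linarith)
  rw [eventually_atTop] at hCev
  obtain ⟨N₁, hN₁⟩ := hCev
  refine ⟨max M N₁, fun v hv => ?_⟩
  have hvM : M ≤ v := le_trans (le_max_left _ _) hv
  have hv0 : (0:ℝ) < v := lt_of_lt_of_le hM0 hvM
  have hve : (0:ℝ) < v ^ (β+1) := Real.rpow_pos_of_pos hv0 _
  have hsplit : I0 + (∫ u in M..v, f u) = ∫ u in (0:ℝ)..v, f u :=
    intervalIntegral.integral_add_adjacent_intervals (hf.intervalIntegrable _ _)
      (hf.intervalIntegrable _ _)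
  have hint1 : IntervalIntegrable (fun u : ℝ => |f u - u ^ β|) volume M v :=
    ((hf.sub hrpow_cont).abs).intervalIntegrable _ _
  have hint2 : IntervalIntegrable (fun u : ℝ => ε₁ * u ^ β) volume M v :=
    (continuous_const.mul hrpow_cont).intervalIntegrable _ _
  have hrint : ∫ u in M..v, u ^ β = (v ^ (β+1) - M ^ (β+1)) / (β+1) :=
    integral_rpow (Or.inl (by linarith))
  have h3 : |∫ u in M..v, (f u - u ^ β)| ≤ ε₁ * ((v ^ (β+1) - M ^ (β+1)) / (β+1)) := by
    calc |∫ u in M..v, (f u - u ^ β)| ≤ ∫ u in M..v, |f u - u ^ β| :=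
          intervalIntegral.abs_integral_le_integral_abs hvM
      _ ≤ ∫ u in M..v, ε₁ * u ^ β := by
          refine intervalIntegral.integral_mono_on hvM hint1 hint2 fun x hx => ?_
          exact hMbound x hx.1
      _ = ε₁ * ((v ^ (β+1) - M ^ (β+1)) / (β+1)) := by
          rw [intervalIntegral.integral_const_mul, hrint]
  have hIeq : ∫ u in M..v, (f u - u ^ β)
      = (∫ u in M..v, f u) - (v ^ (β+1) - M ^ (β+1)) / (β+1) := by
    rw [intervalIntegral.integral_sub (hf.intervalIntegrable _ _)
      (hrpow_cont.intervalIntegrable _ _), hrint]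
  set D : ℝ := (∫ u in M..v, f u) - (v ^ (β+1) - M ^ (β+1)) / (β+1) with hD
  rw [hIeq] at h3
  have hDb : |D| ≤ ε₁ / (β+1) * v ^ (β+1) := by
    have hMe : (0:ℝ) ≤ M ^ (β+1) := (Real.rpow_pos_of_pos hM0 _).le
    calc |D| ≤ ε₁ * ((v ^ (β+1) - M ^ (β+1)) / (β+1)) := h3
      _ = ε₁ / (β+1) * (v ^ (β+1) - M ^ (β+1)) := by ring
      _ ≤ ε₁ / (β+1) * v ^ (β+1) := by
          have h5 : (0:ℝ) ≤ ε₁/(β+1) := by positivity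
          have h4 : v ^ (β+1) - M ^ (β+1) ≤ v ^ (β+1) := by linarith
          exact mul_le_mul_of_nonneg_left h4 h5
  have hkey : (∫ u in (0:ℝ)..v, f u) / v ^ (β+1) - 1/(β+1)
      = I0 / v ^ (β+1) + D / v ^ (β+1) - M ^ (β+1) / ((β+1) * v ^ (β+1)) := by
    rw [← hsplit]
    have : (∫ u in M..v, f u) = D + (v ^ (β+1) - M ^ (β+1)) / (β+1) := by rw [hD]; ring
    rw [this]
    field_simp
    ring
  rw [Real.dist_eq, hkey]
  have hCv : C / v ^ (β+1) < ε/2 := hN₁ v (le_trans (le_max_right _ _) hv)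
  have hCexp : C / v ^ (β+1) = |I0| / v ^ (β+1) + M ^ (β+1) / ((β+1) * v ^ (β+1)) := by
    rw [hC]; field_simp
  have hDv : |D / v ^ (β+1)| ≤ ε₁ / (β+1) := by
    rw [abs_div, abs_of_pos hve, div_le_iff₀ hve]
    calc |D| ≤ ε₁ / (β+1) * v ^ (β+1) := hDb
      _ = ε₁ / (β+1) * v ^ (β+1) := rfl
  have htri : |I0 / v ^ (β+1) + D / v ^ (β+1) - M ^ (β+1) / ((β+1) * v ^ (β+1))|
      ≤ |I0| / v ^ (β+1) + |D / v ^ (β+1)| + M ^ (β+1) / ((β+1) * v ^ (β+1)) := by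
    have h1 : |I0 / v ^ (β+1)| = |I0| / v ^ (β+1) := by rw [abs_div, abs_of_pos hve]
    have h2 : (0:ℝ) ≤ M ^ (β+1) / ((β+1) * v ^ (β+1)) := by positivity
    calc |I0 / v ^ (β+1) + D / v ^ (β+1) - M ^ (β+1) / ((β+1) * v ^ (β+1))|
        ≤ |I0 / v ^ (β+1) + D / v ^ (β+1)| + |M ^ (β+1) / ((β+1) * v ^ (β+1))| := abs_sub _ _
      _ ≤ |I0 / v ^ (β+1)| + |D / v ^ (β+1)| + |M ^ (β+1) / ((β+1) * v ^ (β+1))| := by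
          gcongr; exact abs_add_le _ _
      _ = |I0| / v ^ (β+1) + |D / v ^ (β+1)| + M ^ (β+1) / ((β+1) * v ^ (β+1)) := by
          rw [h1, abs_of_nonneg h2]
  have := htri
  rw [hCexp] at hCv
  linarith [hDv, hε₁e ▸ hDv]

/-- Asymptotics of `φ(v) = s⁻¹(v)/ψ(v)²` where `ψ = s' ∘ s⁻¹`:
`φ(v)/v^{(1-2β)/(β+1)} → (β+1)^{(1-2β)/(β+1)}` as `v → +∞`. -/
theorem stmt8 (β : ℝ) (hβ1 : 1 < β) (hβ5 : β < 5)
    (Θ : ℝ → ℝ) (hΘpos : ∀ v, 0 < Θ v) (hΘC1 : ContDiff ℝ 1 Θ)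
    (hΘeven : ∀ v, Θ (-v) = Θ v)
    (hΘtop : Tendsto (fun v : ℝ => |v| * Θ v) atTop (𝓝 1))
    (hΘbot : Tendsto (fun v : ℝ => |v| * Θ v) atBot (𝓝 1))
    (s : ℝ → ℝ) (hs : ∀ v, s v = ∫ u in (0 : ℝ)..v, (Θ u) ^ (-β))
    (sInv : ℝ → ℝ) (hleft : ∀ v, sInv (s v) = v) (hright : ∀ w, s (sInv w) = w) :
    let ψ : ℝ → ℝ := fun w => (Θ (sInv w)) ^ (-β)
    let φ : ℝ → ℝ := fun w => sInv w / (ψ w) ^ 2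
    Tendsto (fun v : ℝ => φ v / v ^ ((1 - 2 * β) / (β + 1))) atTop
      (𝓝 ((β + 1) ^ ((1 - 2 * β) / (β + 1)))) := by
  intro ψ φ
  have hβ0 : (0:ℝ) < β + 1 := by linarith
  have hf : Continuous (fun u : ℝ => Θ u ^ (-β)) :=
    hΘC1.continuous.rpow_const fun x => Or.inl (hΘpos x).ne'
  have hint := aux_int β hβ1 _ hf (aux_ratio β Θ hΘpos hΘtop)
  have hint' : Tendsto (fun v : ℝ => s v / v ^ (β + 1)) atTop (𝓝 (1 / (β + 1))) := by
    simpa only [← hs] using hint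
  -- s tends to atTop
  have hstop : Tendsto s atTop atTop := by
    have h := hint'.pos_mul_atTop (by positivity) (tendsto_rpow_atTop hβ0)
    refine h.congr' ?_
    filter_upwards [eventually_gt_atTop (0:ℝ)] with v hv
    have hne : v ^ (β + 1) ≠ 0 := (Real.rpow_pos_of_pos hv _).ne'
    field_simp
  -- strict monotonicity of s
  have hmono : StrictMono s := by
    have hderiv : ∀ x : ℝ, HasDerivAt s (Θ x ^ (-β)) x := by
      intro x
      have h := intervalIntegral.integral_hasDerivAt_right
        (hf.intervalIntegrable 0 x) (hf.stronglyMeasurableAtFilter volume (𝓝 x))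
        hf.continuousAt
      have heq : s = fun v => ∫ u in (0:ℝ)..v, Θ u ^ (-β) := funext hs
      rw [heq]; exact h
    apply strictMono_of_deriv_pos
    intro x
    rw [(hderiv x).deriv]
    exact Real.rpow_pos_of_pos (hΘpos x) _
  -- sInv tends to atTop
  have hsInvTop : Tendsto sInv atTop atTop := by
    rw [tendsto_atTop]
    intro A
    filter_upwards [eventually_ge_atTop (s A)] with w hw
    by_contra hlt
    push_neg at hlt
    have h2 := hmono hlt
    rw [hright] at h2
    linarith
  -- (sInv w)^(β+1)/w → β+1
  have hpow : Tendsto (fun w : ℝ => (sInv w) ^ (β + 1) / w) atTop (𝓝 (β + 1)) := by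
    have h := hint'.comp hsInvTop
    have h2 : Tendsto (fun w : ℝ => w / (sInv w) ^ (β + 1)) atTop (𝓝 (1 / (β + 1))) := by
      refine h.congr fun w => ?_
      simp only [Function.comp_apply, hright]
    have h3 := h2.inv₀ (by positivity)
    simpa [inv_div] using h3
  have hc : (0:ℝ) < (β + 1) ^ (1 / (β + 1)) := Real.rpow_pos_of_pos hβ0 _
  -- sInv w / w^(1/(β+1)) → (β+1)^(1/(β+1))
  have hr : Tendsto (fun w : ℝ => sInv w / w ^ (1 / (β + 1))) atTop
      (𝓝 ((β + 1) ^ (1 / (β + 1)))) := by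
    have hct : ContinuousAt (fun x : ℝ => x ^ (1 / (β + 1))) (β + 1) :=
      Real.continuousAt_rpow_const _ _ (Or.inl hβ0.ne')
    have h := hct.tendsto.comp hpow
    refine h.congr' ?_
    filter_upwards [eventually_gt_atTop (0:ℝ), hsInvTop.eventually (eventually_gt_atTop (0:ℝ))]
      with w hw ha
    simp only [Function.comp_apply]
    rw [Real.div_rpow (Real.rpow_nonneg ha.le _) hw.le, ← Real.rpow_mul ha.le,
      mul_one_div, div_self hβ0.ne', Real.rpow_one]
  -- ψ w / (sInv w)^β → 1
  have hq : Tendsto (fun w : ℝ => ψ w / (sInv w) ^ β) atTop (𝓝 1) := by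
    have h := (aux_ratio β Θ hΘpos hΘtop).comp hsInvTop
    exact h
  -- the combined limit
  have hfinal : Tendsto (fun w : ℝ =>
      (sInv w / w ^ (1 / (β + 1))) ^ (1 - 2 * β) / (ψ w / (sInv w) ^ β) ^ 2)
      atTop (𝓝 (((β + 1) ^ (1 / (β + 1))) ^ (1 - 2 * β) / 1 ^ 2)) := by
    apply Tendsto.div
    · exact (Real.continuousAt_rpow_const _ _ (Or.inl hc.ne')).tendsto.comp hr
    · exact hq.pow 2
    · norm_num
  have heq : ∀ᶠ w in atTop,
      (sInv w / w ^ (1 / (β + 1))) ^ (1 - 2 * β) / (ψ w / (sInv w) ^ β) ^ 2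
      = φ w / w ^ ((1 - 2 * β) / (β + 1)) := by
    filter_upwards [eventually_gt_atTop (0:ℝ), hsInvTop.eventually (eventually_gt_atTop (0:ℝ))]
      with w hw ha
    have hψ : 0 < ψ w := Real.rpow_pos_of_pos (hΘpos _) _
    have haβ : 0 < (sInv w) ^ β := Real.rpow_pos_of_pos ha _
    have hwc : 0 < w ^ (1 / (β + 1)) := Real.rpow_pos_of_pos hw _
    have hwe : 0 < w ^ ((1 - 2 * β) / (β + 1)) := Real.rpow_pos_of_pos hw _
    have hE : (1 / (β + 1)) * (1 - 2 * β) = (1 - 2 * β) / (β + 1) := one_div_mul_eq_div _ _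
    have hids : (sInv w) ^ (1 - 2 * β) * ((sInv w) ^ β) ^ 2 = sInv w := by
      rw [sq, ← Real.rpow_add ha, ← Real.rpow_add ha,
        show (1 - 2 * β) + (β + β) = (1:ℝ) by ring, Real.rpow_one]
    show _ = sInv w / ψ w ^ 2 / w ^ ((1 - 2 * β) / (β + 1))
    rw [Real.div_rpow ha.le hwc.le, ← Real.rpow_mul hw.le, hE, div_pow (ψ w)]
    rw [div_div_div_comm, div_div_eq_mul_div, div_mul_eq_mul_div, hids]
  have hval : ((β + 1 : ℝ) ^ (1 / (β + 1))) ^ (1 - 2 * β) / 1 ^ 2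
      = (β + 1) ^ ((1 - 2 * β) / (β + 1)) := by
    rw [← Real.rpow_mul hβ0.le, one_div_mul_eq_div, one_pow, div_one]
  have hres := hfinal.congr' heq
  rwa [hval] at hres
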